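/- Gradient norm controlled by the stationarity measure: Let E be a finite-dimensional real inner product space, X ⊆ E, and let h satisfy the mirror hypotheses on X with Hessian bounds 0 < μ_X ≤ 𝓛_X. Let f : E → ℝ be differentiable, c > 0, and suppose x ∈ X and x̂ ∈ X satisfy ∇h(x̂) = ∇h(x) − c·∇f(x). Then ‖∇f(x)‖² ≤ 2·𝓛_X·D_h(x, x̂)/c²; equivalently, with 𝒢 := D_h(x, x̂)/c² and κ := 𝓛_X/μ_X, one has ‖∇f(x)‖²/μ_X ≤ 2κ·𝒢. -/

import Mathlib

open RealInnerProductSpace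

/-- The mirror hypotheses for a kernel `h` with gradient `h'` and Hessian `h''`
on a set `X`: `h` is twice continuously differentiable on an open set containing `X`,
the image `h' '' X` is convex, and there is a continuously differentiable local inverse
`gstar` of the mirror map `h'`, defined on an open set containing `h' '' X`, mapping the
convex hull of `h' '' X` into `X`. -/
structure MirrorHyp {E : Type*} [NormedAddCommGroup E] [InnerProductSpace ℝ E]
    [CompleteSpace E] (h : E → ℝ) (h' : E → E) (h'' : E → E →L[ℝ] E) (X : Set E) where
  U : Set E
  isOpen_U : IsOpen U
  subset_U : X ⊆ U
  grad : ∀ x ∈ U, HasGradientAt h (h' x) x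
  hess : ∀ x ∈ U, HasFDerivAt h' (h'' x) x
  hess_cont : ContinuousOn h'' U
  img_convex : Convex ℝ (h' '' X)
  gstar : E → E
  V : Set E
  isOpen_V : IsOpen V
  img_subset_V : h' '' X ⊆ V
  gstar_contDiff : ContDiffOn ℝ 1 gstar V
  gstar_rightInv : ∀ w ∈ V, h' (gstar w) = w
  gstar_leftInv : ∀ x ∈ X, gstar (h' x) = x
  gstar_maps : ∀ w ∈ convexHull ℝ (h' '' X), gstar w ∈ X

private lemma psd_cs {E : Type*} [NormedAddCommGroup E] [InnerProductSpace ℝ E]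
    (H : E →L[ℝ] E) (hsymm : ∀ a b : E, ⟪H a, b⟫ = ⟪H b, a⟫)
    (hpsd : ∀ a : E, 0 ≤ ⟪H a, a⟫) (u w : E) :
    ⟪H u, w⟫ ^ 2 ≤ ⟪H u, u⟫ * ⟪H w, w⟫ := by
  have key : ∀ t : ℝ, 0 ≤ ⟪H w, w⟫ * (t * t) + (2 * ⟪H u, w⟫) * t + ⟪H u, u⟫ := by
    intro t
    have h0 := hpsd (u + t • w)
    have expand : ⟪H (u + t • w), u + t • w⟫
        = ⟪H w, w⟫ * (t * t) + (2 * ⟪H u, w⟫) * t + ⟪H u, u⟫ := by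
      simp only [map_add, map_smul, inner_add_left, inner_add_right,
        real_inner_smul_left, real_inner_smul_right, hsymm w u]
      ring
    linarith [expand ▸ h0]
  have hd := discrim_le_zero key
  rw [discrim] at hd
  nlinarith [hd]

private lemma norm_sq_le_L_inner {E : Type*} [NormedAddCommGroup E] [InnerProductSpace ℝ E]
    {𝓛 : ℝ} (h𝓛 : 0 < 𝓛) (H : E →L[ℝ] E) (hsymm : ∀ a b : E, ⟪H a, b⟫ = ⟪H b, a⟫)
    (hpsd : ∀ a : E, 0 ≤ ⟪H a, a⟫) (hub : ∀ a : E, ⟪H a, a⟫ ≤ 𝓛 * ‖a‖ ^ 2) (u : E) :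
    ‖H u‖ ^ 2 ≤ 𝓛 * ⟪H u, u⟫ := by
  have hcs := psd_cs H hsymm hpsd u (H u)
  have h1 : ⟪H u, H u⟫ = ‖H u‖ ^ 2 := real_inner_self_eq_norm_sq (H u)
  have h2 := hub (H u)
  have h3 := hpsd u
  rcases eq_or_ne (‖H u‖) 0 with h0 | h0
  · have hn : (0:ℝ) ≤ 𝓛 * ⟪H u, u⟫ := mul_nonneg h𝓛.le (hpsd u)
    simpa [h0] using hn
  · have hp : 0 < ‖H u‖ ^ 2 := by positivity
    nlinarith [hcs, h2, h3, hp]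

noncomputable def realDualCLM (E : Type*) [NormedAddCommGroup E] [InnerProductSpace ℝ E] :
    E →L[ℝ] (E →L[ℝ] ℝ) :=
  { toLinearMap :=
    { toFun := fun a => innerSL ℝ a
      map_add' := by intro a b; ext c; simp [inner_add_left]
      map_smul' := by intro r a; ext c; simp [real_inner_smul_left] }
    cont := (innerSL ℝ).continuous }

@[simp] lemma realDualCLM_apply {E : Type*} [NormedAddCommGroup E] [InnerProductSpace ℝ E]
    (a b : E) : realDualCLM E a b = ⟪a, b⟫ := rfl



private lemma bregman_lb
    {E : Type*} [NormedAddCommGroup E] [InnerProductSpace ℝ E] [FiniteDimensional ℝ E]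
    (X : Set E) (h : E → ℝ) (h' : E → E) (h'' : E → E →L[ℝ] E)
    (mh : MirrorHyp h h' h'' X)
    (μX 𝓛X : ℝ) (hμX : 0 < μX) (hμ𝓛 : μX ≤ 𝓛X)
    (hbound : ∀ u ∈ X, ∀ v : E,
      μX * ‖v‖ ^ 2 ≤ ⟪h'' u v, v⟫ ∧ ⟪h'' u v, v⟫ ≤ 𝓛X * ‖v‖ ^ 2)
    (x xhat : E) (hx : x ∈ X) (hxhat : xhat ∈ X) :
    ‖h' x - h' xhat‖ ^ 2 / (2 * 𝓛X) ≤ h x - h xhat - ⟪h' xhat, x - xhat⟫ := by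
  have hL : 0 < 𝓛X := lt_of_lt_of_le hμX hμ𝓛
  set w1 := h' x with hw1def
  set w2 := h' xhat with hw2def
  set v := w1 - w2 with hvdef
  have hw1 : w1 ∈ h' '' X := ⟨x, hx, rfl⟩
  have hw2 : w2 ∈ h' '' X := ⟨xhat, hxhat, rfl⟩
  set wseg : ℝ → E := fun t => w2 + t • v with hwsegdef
  have hseg_mem : ∀ t ∈ Set.Icc (0:ℝ) 1, wseg t ∈ h' '' X := fun t ht =>
    mh.img_convex.add_smul_sub_mem hw2 hw1 ht
  have hwV : ∀ t ∈ Set.Icc (0:ℝ) 1, wseg t ∈ mh.V := fun t ht =>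
    mh.img_subset_V (hseg_mem t ht)
  set γ : ℝ → E := fun t => mh.gstar (wseg t) with hγdef
  have hγX : ∀ t ∈ Set.Icc (0:ℝ) 1, γ t ∈ X := fun t ht =>
    mh.gstar_maps _ (subset_convexHull ℝ _ (hseg_mem t ht))
  have hwderiv : ∀ t : ℝ, HasDerivAt wseg v t := by
    intro t
    rw [hwsegdef]; simpa using (((hasDerivAt_id t).smul_const v).const_add w2)
  set ψ : ℝ → ℝ := fun s => h (γ s) - ⟪w2, γ s⟫ with hψdef
  set φ : ℝ → ℝ := fun s => ψ s - s ^ 2 * (‖v‖ ^ 2 / (2 * 𝓛X)) with hφdef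
  -- key derivative facts
  have key : ∀ t ∈ Set.Icc (0:ℝ) 1, ∃ d : ℝ, HasDerivAt φ d t ∧ 0 ≤ d := by
    intro t ht
    have hVmem := hwV t ht
    have hγtX := hγX t ht
    have hγtU : γ t ∈ mh.U := mh.subset_U hγtX
    have hGdiff : HasFDerivAt mh.gstar (fderiv ℝ mh.gstar (wseg t)) (wseg t) :=
      ((mh.gstar_contDiff.contDiffAt (mh.isOpen_V.mem_nhds hVmem)).differentiableAt
        one_ne_zero).hasFDerivAt
    set G := fderiv ℝ mh.gstar (wseg t) with hGdef
    set u := G v with hudef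
    have hγderiv : HasDerivAt γ u t := hGdiff.comp_hasDerivAt t (hwderiv t)
    set H := h'' (γ t) with hHdef
    -- H ∘ G = id
    have hid : H.comp G = ContinuousLinearMap.id ℝ E := by
      have hcomp : HasFDerivAt (fun w => h' (mh.gstar w)) (H.comp G) (wseg t) :=
        (mh.hess _ hγtU).comp (wseg t) hGdiff
      have heq : HasFDerivAt (id : E → E) (H.comp G) (wseg t) := by
        apply hcomp.congr_of_eventuallyEq
        filter_upwards [mh.isOpen_V.eventually_mem hVmem] with w hw
        exact (mh.gstar_rightInv w hw).symm
      exact heq.unique (hasFDerivAt_id _)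
    have hHu : H u = v := by
      have := congrArg (fun L : E →L[ℝ] E => L v) hid
      simpa using this
    -- symmetry of H
    have hsymm : ∀ a b : E, ⟪H a, b⟫ = ⟪H b, a⟫ := by
      intro a b
      have hev : ∀ᶠ y in nhds (γ t),
          HasFDerivAt h ((InnerProductSpace.toDual ℝ E) (h' y)) y := by
        filter_upwards [mh.isOpen_U.eventually_mem hγtU] with y hy
        exact (mh.grad y hy).hasFDerivAt
      have hf'' : HasFDerivAt (fun y => (InnerProductSpace.toDual ℝ E) (h' y))
          ((realDualCLM E).comp H) (γ t) := by
        have hc := (realDualCLM E).hasFDerivAt.comp (γ t) (mh.hess _ hγtU)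
        apply hc.congr_of_eventuallyEq
        filter_upwards [] with y
        ext z
        simp [realDualCLM, InnerProductSpace.toDual_apply_apply]
      have hs := second_derivative_symmetric_of_eventually hev hf'' a b
      simpa [realDualCLM, InnerProductSpace.toDual_apply_apply] using hs
    have hpsd : ∀ a : E, 0 ≤ ⟪H a, a⟫ := fun a =>
      le_trans (by positivity) ((hbound _ hγtX a).1)
    have hub : ∀ a : E, ⟪H a, a⟫ ≤ 𝓛X * ‖a‖ ^ 2 := fun a => (hbound _ hγtX a).2
    have hkey : ‖v‖ ^ 2 ≤ 𝓛X * ⟪v, u⟫ := by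
      have := norm_sq_le_L_inner hL H hsymm hpsd hub u
      rwa [hHu] at this
    -- derivative of ψ
    have hψ' : HasDerivAt ψ (t * ⟪v, u⟫) t := by
      have h1 : HasDerivAt (fun s => h (γ s)) (⟪wseg t, u⟫) t := by
        have := ((mh.grad _ hγtU).hasFDerivAt).comp_hasDerivAt t hγderiv
        simpa [InnerProductSpace.toDual_apply_apply, Function.comp_def,
          show h' (γ t) = wseg t from mh.gstar_rightInv _ hVmem] using this
      have h2 : HasDerivAt (fun s => ⟪w2, γ s⟫) (⟪w2, u⟫) t := by
        simpa using (hasDerivAt_const t w2).inner ℝ hγderiv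
      have h3 := h1.sub h2
      refine h3.congr_deriv ?_
      have : wseg t - w2 = t • v := by simp [hwsegdef]
      rw [← inner_sub_left, this, real_inner_smul_left]
    have hφ' : HasDerivAt φ (t * ⟪v, u⟫ - 2 * t * (‖v‖ ^ 2 / (2 * 𝓛X))) t := by
      have h4 : HasDerivAt (fun s : ℝ => s ^ 2 * (‖v‖ ^ 2 / (2 * 𝓛X)))
          (2 * t * (‖v‖ ^ 2 / (2 * 𝓛X))) t := by
        simpa [mul_comm] using (hasDerivAt_pow 2 t).mul_const (‖v‖ ^ 2 / (2 * 𝓛X))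
      exact hψ'.sub h4
    refine ⟨_, hφ', ?_⟩
    have ht0 : 0 ≤ t := ht.1
    have : t * (‖v‖ ^ 2 / 𝓛X) ≤ t * ⟪v, u⟫ := by
      apply mul_le_mul_of_nonneg_left _ ht0
      rw [div_le_iff₀ hL]
      linarith [hkey]
    have heq2 : 2 * t * (‖v‖ ^ 2 / (2 * 𝓛X)) = t * (‖v‖ ^ 2 / 𝓛X) := by
      field_simp
    linarith [heq2 ▸ this]
  -- monotonicity of φ on [0,1]
  have hmono : MonotoneOn φ (Set.Icc (0:ℝ) 1) := by
    apply monotoneOn_of_deriv_nonneg (convex_Icc 0 1)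
    · intro t ht
      obtain ⟨d, hd, _⟩ := key t ht
      exact hd.continuousAt.continuousWithinAt
    · intro t ht
      rw [interior_Icc] at ht
      obtain ⟨d, hd, _⟩ := key t (Set.mem_Icc_of_Ioo ht)
      exact hd.differentiableAt.differentiableWithinAt
    · intro t ht
      rw [interior_Icc] at ht
      obtain ⟨d, hd, hd0⟩ := key t (Set.mem_Icc_of_Ioo ht)
      rw [hd.deriv]; exact hd0
  have h01 := hmono (Set.left_mem_Icc.2 zero_le_one) (Set.right_mem_Icc.2 zero_le_one)
    zero_le_one
  have hγ0 : γ 0 = xhat := by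
    have : wseg 0 = w2 := by simp [hwsegdef]
    rw [hγdef]; simp only []; rw [this, hw2def]; exact mh.gstar_leftInv xhat hxhat
  have hγ1 : γ 1 = x := by
    have : wseg 1 = w1 := by simp [hwsegdef, hvdef]
    rw [hγdef]; simp only []; rw [this, hw1def]; exact mh.gstar_leftInv x hx
  have hφ0 : φ 0 = h xhat - ⟪w2, xhat⟫ := by simp [hφdef, hψdef, hγ0]
  have hφ1 : φ 1 = h x - ⟪w2, x⟫ - ‖v‖ ^ 2 / (2 * 𝓛X) := by
    simp [hφdef, hψdef, hγ1]
  rw [hφ0, hφ1] at h01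
  have hinner : ⟪w2, x - xhat⟫ = ⟪w2, x⟫ - ⟪w2, xhat⟫ := inner_sub_right _ _ _
  rw [hvdef] at h01 ⊢
  linarith [h01]


/-- **Gradient norm controlled by the stationarity measure.** Under the mirror
hypotheses with Hessian bounds `0 < μX ≤ 𝓛X` on `X`, if `x, xhat ∈ X` satisfy the
proximal characterization `∇h xhat = ∇h x - c • ∇f x` with `c > 0`, then
`‖∇f x‖² ≤ 2 𝓛X D_h(x, xhat)/c²`; equivalently, with `𝒢 = D_h(x, xhat)/c²` and
`κ = 𝓛X/μX`, one has `‖∇f x‖²/μX ≤ 2 κ 𝒢`. -/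
theorem grad_norm_le_stationarity_measure
    {E : Type*} [NormedAddCommGroup E] [InnerProductSpace ℝ E] [FiniteDimensional ℝ E]
    (X : Set E) (h : E → ℝ) (h' : E → E) (h'' : E → E →L[ℝ] E)
    (mh : MirrorHyp h h' h'' X)
    (μX 𝓛X : ℝ) (hμX : 0 < μX) (hμ𝓛 : μX ≤ 𝓛X)
    (hbound : ∀ u ∈ X, ∀ v : E,
      μX * ‖v‖ ^ 2 ≤ ⟪h'' u v, v⟫ ∧ ⟪h'' u v, v⟫ ≤ 𝓛X * ‖v‖ ^ 2)
    (f : E → ℝ) (f' : E → E)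
    (hfgrad : ∀ x : E, HasGradientAt f (f' x) x)
    (c : ℝ) (hc : 0 < c)
    (x xhat : E) (hx : x ∈ X) (hxhat : xhat ∈ X)
    (hprox : h' xhat = h' x - c • f' x) :
    ‖f' x‖ ^ 2 ≤ 2 * 𝓛X * (h x - h xhat - ⟪h' xhat, x - xhat⟫) / c ^ 2 ∧
    ‖f' x‖ ^ 2 / μX ≤ 2 * (𝓛X / μX) * ((h x - h xhat - ⟪h' xhat, x - xhat⟫) / c ^ 2) := by
  have hL : 0 < 𝓛X := lt_of_lt_of_le hμX hμ𝓛
  have haux := bregman_lb X h h' h'' mh μX 𝓛X hμX hμ𝓛 hbound x xhat hx hxhat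
  set D := h x - h xhat - ⟪h' xhat, x - xhat⟫ with hD
  have hv : h' x - h' xhat = c • f' x := by rw [hprox]; abel
  have hnorm : ‖h' x - h' xhat‖ ^ 2 = c ^ 2 * ‖f' x‖ ^ 2 := by
    rw [hv, norm_smul, mul_pow, Real.norm_eq_abs, sq_abs]
  rw [hnorm] at haux
  have h1 : c ^ 2 * ‖f' x‖ ^ 2 ≤ 2 * 𝓛X * D := by
    rw [div_le_iff₀ (by positivity : (0:ℝ) < 2 * 𝓛X)] at haux
    linarith
  have goal1 : ‖f' x‖ ^ 2 ≤ 2 * 𝓛X * D / c ^ 2 := by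
    rw [le_div_iff₀ (by positivity : (0:ℝ) < c ^ 2)]
    nlinarith [h1]
  refine ⟨goal1, ?_⟩
  calc ‖f' x‖ ^ 2 / μX ≤ (2 * 𝓛X * D / c ^ 2) / μX := by gcongr
    _ = 2 * (𝓛X / μX) * (D / c ^ 2) := by ring
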